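/- Let 𝓗 be a finite set of subgroups of a finite group G, each of the same prime order p, with |𝓗| ≥ 2. Then any POVM on k copies identifying the coset state from 𝓗 with average success probability at least 2/3 requires k ≥ log|𝓗|/(log p) − log(3/2)/log p; conversely, the pretty good measurement on k copies succeeds with error probability at most 4|𝓗|/p^k, so k = O(log|𝓗|/log p) copies suffice. -/

import Mathlib

set_option linter.unusedSectionVars false
set_option maxHeartbeats 1000000

noncomputable section

open scoped BigOperators ComplexOrder

open Classical in
/-- The coset state `ρ_H = (1/|G|) ∑_g |gH⟩⟨gH|`; its `(x, y)` entry is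
`1/|G|` if `x⁻¹ y ∈ H` and `0` otherwise. -/
def cosetState {G : Type*} [Group G] [Fintype G] (H : Subgroup G) : Matrix G G ℂ :=
  fun x y => if x⁻¹ * y ∈ H then (1 : ℂ) / (Fintype.card G) else 0

/-- `k`-fold tensor power of a matrix. -/
def tensorPow {n : Type*} [Fintype n] (M : Matrix n n ℂ) (k : ℕ) :
    Matrix (Fin k → n) (Fin k → n) ℂ :=
  fun x y => ∏ i, M (x i) (y i)

/-- Trace norm `‖Y‖₁ = tr √(Yᴴ Y)`. -/
def traceNorm {n : Type*} [Fintype n] [DecidableEq n] (Y : Matrix n n ℂ) : ℝ :=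
  (((Matrix.posSemidef_conjTranspose_mul_self Y).1.eigenvectorUnitary.1 *
      Matrix.diagonal (((↑) : ℝ → ℂ) ∘ Real.sqrt ∘ (Matrix.posSemidef_conjTranspose_mul_self Y).1.eigenvalues) *
      (star (Matrix.posSemidef_conjTranspose_mul_self Y).1.eigenvectorUnitary : Matrix n n ℂ)).trace).re

/-- Operator (spectral) norm of a matrix. -/
def opNorm {n : Type*} [Fintype n] [DecidableEq n] (M : Matrix n n ℂ) : ℝ :=
  ‖Matrix.toEuclideanCLM (𝕜 := ℂ) M‖

/-- Square root of the Moore–Penrose pseudoinverse of a Hermitian matrix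
(junk value `0` on non-Hermitian input). -/
def pinvSqrt {n : Type*} [Fintype n] [DecidableEq n] (A : Matrix n n ℂ) : Matrix n n ℂ :=
  if h : A.IsHermitian then
    h.eigenvectorUnitary.1 *
      Matrix.diagonal (fun i => ((Real.sqrt (h.eigenvalues i))⁻¹ : ℂ)) *
      (star h.eigenvectorUnitary : Matrix n n ℂ)
  else 0

namespace PGMAux

open Matrix

section MatrixHelpers

variable {n : Type*} [Fintype n] [DecidableEq n]

lemma tensorPow_mul (A B : Matrix n n ℂ) (k : ℕ) :
    tensorPow A k * tensorPow B k = tensorPow (A * B) k := by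
  funext x y
  have h := Finset.prod_univ_sum (fun _ : Fin k => (Finset.univ : Finset n))
    (fun i w => A (x i) w * B w (y i))
  simp only [Fintype.piFinset_univ] at h
  simp only [tensorPow, Matrix.mul_apply, ← Finset.prod_mul_distrib, ← h]

lemma tensorPow_trace (A : Matrix n n ℂ) (k : ℕ) :
    (tensorPow A k).trace = A.trace ^ k := by
  have h := Finset.prod_univ_sum (fun _ : Fin k => (Finset.univ : Finset n))
    (fun (_ : Fin k) (w : n) => A w w)
  simp only [Fintype.piFinset_univ] at h
  simp only [Matrix.trace, Matrix.diag, tensorPow, ← h, Finset.prod_const, Finset.card_univ,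
    Fintype.card_fin]

lemma tensorPow_smul (c : ℂ) (A : Matrix n n ℂ) (k : ℕ) :
    tensorPow (c • A) k = c ^ k • tensorPow A k := by
  funext x y
  simp [tensorPow, Finset.prod_mul_distrib, Finset.prod_const, Finset.card_univ]

lemma tensorPow_isHermitian {A : Matrix n n ℂ} (hA : A.IsHermitian) (k : ℕ) :
    (tensorPow A k).IsHermitian := by
  unfold Matrix.IsHermitian
  funext x y
  simp only [Matrix.conjTranspose_apply, tensorPow, star_prod]
  exact Finset.prod_congr rfl fun i _ => by rw [← Matrix.conjTranspose_apply, hA.eq]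

lemma trace_mul_eq_sum (A B : Matrix n n ℂ) :
    (A * B).trace = ∑ i, ∑ j, A i j * B j i := by
  simp [Matrix.trace, Matrix.diag, Matrix.mul_apply]

lemma psd_of_idem {A : Matrix n n ℂ} (hA : A.IsHermitian) (h : A * A = A) : A.PosSemidef := by
  have h2 : Aᴴ * A = A := by rw [hA.eq, h]
  exact h2 ▸ Matrix.posSemidef_conjTranspose_mul_self A

lemma psd_diag_nonneg {A : Matrix n n ℂ} (hA : A.PosSemidef) (i : n) : 0 ≤ A i i := by
  exact hA.diag_nonneg

lemma psd_trace_re_nonneg {A : Matrix n n ℂ} (hA : A.PosSemidef) : 0 ≤ A.trace.re := by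
  rw [Matrix.trace, Complex.re_sum]
  exact Finset.sum_nonneg fun i _ => (Complex.nonneg_iff.mp (psd_diag_nonneg hA i)).1

open scoped MatrixOrder in
lemma trace_mul_psd_re_nonneg {A B : Matrix n n ℂ} (hA : A.PosSemidef) (hB : B.PosSemidef) :
    0 ≤ ((A * B).trace).re := by
  have hs : CFC.sqrt A * CFC.sqrt A = A := CFC.sqrt_mul_sqrt_self A hA.nonneg
  have h1 : A * B = CFC.sqrt A * (CFC.sqrt A * B) := by rw [← mul_assoc, hs]
  rw [h1, Matrix.trace_mul_comm, Matrix.mul_assoc]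
  rw [← Matrix.mul_assoc]
  have h2 : (CFC.sqrt A * B * CFC.sqrt A).PosSemidef := by
    have := hB.mul_mul_conjTranspose_same (CFC.sqrt A)
    rwa [(CFC.sqrt_nonneg A).posSemidef.1.eq] at this
  exact psd_trace_re_nonneg h2

lemma psd_sum {ι : Type*} (s : Finset ι) (f : ι → Matrix n n ℂ)
    (h : ∀ i ∈ s, (f i).PosSemidef) : (∑ i ∈ s, f i).PosSemidef :=
  Finset.sum_induction f (fun M => M.PosSemidef) (fun _ _ ha hb => ha.add hb)
    Matrix.PosSemidef.zero h

lemma scalar_ineq {a b : ℝ} (ha : 0 < a) (hb : 0 < b) :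
    (6 - a - b) / 4 ≤ Real.sqrt ((Real.sqrt a)⁻¹ * (Real.sqrt b)⁻¹) := by
  have hsa : 0 < Real.sqrt a := Real.sqrt_pos.mpr ha
  have hsb : 0 < Real.sqrt b := Real.sqrt_pos.mpr hb
  set x := Real.sqrt (Real.sqrt a * Real.sqrt b) with hxdef
  have hxpos : 0 < x := Real.sqrt_pos.mpr (by positivity)
  have hrw : Real.sqrt ((Real.sqrt a)⁻¹ * (Real.sqrt b)⁻¹) = x⁻¹ := by
    rw [← mul_inv, Real.sqrt_inv]
  rw [hrw]
  have hx2 : x ^ 2 = Real.sqrt a * Real.sqrt b := Real.sq_sqrt (by positivity)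
  have h2 : 2 - x ≤ x⁻¹ := by
    have hh : (2 - x) * x ≤ 1 := by nlinarith [sq_nonneg (x - 1)]
    rw [← one_div]
    exact (le_div_iff₀ hxpos).mpr hh
  have h3 : x ≤ (Real.sqrt a + Real.sqrt b) / 2 := by
    have h5 : Real.sqrt (Real.sqrt a * Real.sqrt b)
        ≤ Real.sqrt (((Real.sqrt a + Real.sqrt b) / 2) ^ 2) :=
      Real.sqrt_le_sqrt (by nlinarith [sq_nonneg (Real.sqrt a - Real.sqrt b)])
    rwa [Real.sqrt_sq (by positivity)] at h5
  have h4a : Real.sqrt a ≤ (1 + a) / 2 := by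
    nlinarith [sq_nonneg (Real.sqrt a - 1), Real.sq_sqrt ha.le]
  have h4b : Real.sqrt b ≤ (1 + b) / 2 := by
    nlinarith [sq_nonneg (Real.sqrt b - 1), Real.sq_sqrt hb.le]
  linarith

lemma pgm_key {P S : Matrix n n ℂ}
    (hPh : P.IsHermitian) (hPidem : P * P = P) (hS : S.PosSemidef)
    (hle : (S - P).PosSemidef) {d t : ℝ} (hd : 0 < d) (ht : 0 ≤ t)
    (htrP : P.trace = (d : ℂ)) (htrSP : (S * P).trace = ((d + t : ℝ) : ℂ)) :
    (((1 : Matrix n n ℂ) - pinvSqrt S * P * pinvSqrt S) * P).trace.re ≤ t := by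
  classical
  set u : Matrix n n ℂ := (hS.1.eigenvectorUnitary : Matrix n n ℂ) with hudef
  have hu1 : star u * u = 1 := Matrix.mem_unitaryGroup_iff'.mp hS.1.eigenvectorUnitary.2
  have hu2 : u * star u = 1 := Matrix.mem_unitaryGroup_iff.mp hS.1.eigenvectorUnitary.2
  set lam : n → ℝ := hS.1.eigenvalues with hlamdef
  set Dc : Matrix n n ℂ := Matrix.diagonal (fun i => (lam i : ℂ)) with hDcdef
  set D' : Matrix n n ℂ := Matrix.diagonal (fun i => ((Real.sqrt (lam i))⁻¹ : ℂ)) with hD'def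
  have hspec : S = u * Dc * star u := hS.1.spectral_theorem
  have hM : pinvSqrt S = u * D' * star u := by
    rw [pinvSqrt, dif_pos hS.1]
  set B : Matrix n n ℂ := star u * P * u with hBdef
  have hPB : P = u * B * star u := by
    rw [hBdef]
    have h : u * (star u * P * u) * star u = (u * star u) * P * (u * star u) := by noncomm_ring
    rw [h, hu2, Matrix.one_mul, Matrix.mul_one]
  have collapse : ∀ X Y : Matrix n n ℂ,
      (u * X * star u) * (u * Y * star u) = u * (X * Y) * star u := by
    intro X Y
    have h : (u * X * star u) * (u * Y * star u) = u * (X * ((star u * u) * Y)) * star u := by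
      noncomm_ring
    rw [h, hu1, Matrix.one_mul]
  have trace_conj : ∀ X : Matrix n n ℂ, (u * X * star u).trace = X.trace := by
    intro X
    rw [Matrix.trace_mul_cycle, hu1, Matrix.one_mul]
  have hBherm : B.IsHermitian := by
    rw [hBdef]
    unfold Matrix.IsHermitian
    simp only [Matrix.conjTranspose_mul, Matrix.conjTranspose_conjTranspose,
      Matrix.star_eq_conjTranspose, hPh.eq, Matrix.mul_assoc]
  have hBconj : ∀ i j, B j i = starRingEnd ℂ (B i j) := by
    intro i j
    conv_lhs => rw [← hBherm.eq]
    rw [Matrix.conjTranspose_apply]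
    rfl
  have hPpsd : P.PosSemidef := psd_of_idem hPh hPidem
  have hBpsd : B.PosSemidef := by
    rw [hBdef, Matrix.star_eq_conjTranspose]
    exact hPpsd.conjTranspose_mul_mul_same u
  have hBidem : B * B = B := by
    rw [hBdef]
    have h : (star u * P * u) * (star u * P * u)
        = star u * (P * ((u * star u) * P)) * u := by noncomm_ring
    rw [h, hu2, Matrix.one_mul, hPidem]
  have hsuSu : star u * S * u = Dc := by
    rw [hspec]
    have h : star u * (u * Dc * star u) * u = (star u * u) * Dc * (star u * u) := by noncomm_ring
    rw [h, hu1, Matrix.one_mul, Matrix.mul_one]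
  have hDBpsd : (Dc - B).PosSemidef := by
    have h1 := hle.conjTranspose_mul_mul_same u
    have h2 : uᴴ * (S - P) * u = Dc - B := by
      rw [Matrix.mul_sub, Matrix.sub_mul, ← Matrix.star_eq_conjTranspose, hsuSu, ← hBdef]
    rwa [h2] at h1
  set β : n → n → ℝ := fun i j => Complex.normSq (B i j) with hβdef
  set dv : n → ℝ := fun i => (Real.sqrt (lam i))⁻¹ with hdvdef
  have hβnn : ∀ i j, 0 ≤ β i j := fun i j => Complex.normSq_nonneg _
  have hdvnn : ∀ i, 0 ≤ dv i := fun i => inv_nonneg.mpr (Real.sqrt_nonneg _)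
  have hlamnn : ∀ i, 0 ≤ lam i := fun i => hS.eigenvalues_nonneg i
  have hBdiag : ∀ i, B i i = ((∑ j, β i j : ℝ) : ℂ) := by
    intro i
    conv_lhs => rw [← hBidem]
    rw [Matrix.mul_apply, Complex.ofReal_sum]
    refine Finset.sum_congr rfl fun j _ => ?_
    rw [hBconj i j, Complex.mul_conj]
  have hzero : ∀ i, lam i = 0 → ∀ j, B i j = 0 := by
    intro i h0 j
    have h1 : 0 ≤ (Dc - B) i i := psd_diag_nonneg hDBpsd i
    have h2 : (Dc - B) i i = - B i i := by
      rw [Matrix.sub_apply, hDcdef, Matrix.diagonal_apply_eq, h0]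
      simp
    have h3 : 0 ≤ B i i := psd_diag_nonneg hBpsd i
    have h4 : B i i = 0 := le_antisymm (by rwa [h2, neg_nonneg] at h1) h3
    rw [hBdiag i] at h4
    have h5 : (∑ j, β i j) = 0 := by exact_mod_cast h4
    have h6 : β i j = 0 :=
      (Finset.sum_eq_zero_iff_of_nonneg (fun j _ => hβnn i j)).mp h5 j (Finset.mem_univ j)
    exact Complex.normSq_eq_zero.mp h6
  have htrB : B.trace = (d : ℂ) := by
    have h : B.trace = P.trace := by
      rw [hBdef, Matrix.trace_mul_cycle, hu2, Matrix.one_mul]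
    rw [h, htrP]
  have hd_eq : ∑ i, ∑ j, β i j = d := by
    have h1 : B.trace = ((∑ i, ∑ j, β i j : ℝ) : ℂ) := by
      rw [Matrix.trace, Complex.ofReal_sum]
      exact Finset.sum_congr rfl fun i _ => hBdiag i
    rw [htrB] at h1
    exact_mod_cast h1.symm
  have hst : ∑ i, ∑ j, lam i * β i j = d + t := by
    have h1 : S * P = u * (Dc * B) * star u := by
      conv_lhs => rw [hspec, hPB]
      exact collapse Dc B
    have h2 : (S * P).trace = ((∑ i, ∑ j, lam i * β i j : ℝ) : ℂ) := by
      rw [h1, trace_conj, Matrix.trace, Complex.ofReal_sum]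
      refine Finset.sum_congr rfl fun i _ => ?_
      rw [Matrix.diag_apply, hDcdef, Matrix.diagonal_mul, hBdiag i, Complex.ofReal_sum,
        Complex.ofReal_sum, Finset.mul_sum]
      exact Finset.sum_congr rfl fun j _ => by push_cast; ring
    rw [htrSP] at h2
    exact_mod_cast h2.symm
  have hβsymm : ∀ i j, β i j = β j i := by
    intro i j
    rw [hβdef]
    simp only
    rw [hBconj i j]
    exact (Complex.normSq_conj _).symm
  have hst' : ∑ i, ∑ j, lam j * β i j = d + t := by
    rw [Finset.sum_comm, ← hst]
    exact Finset.sum_congr rfl fun j _ => Finset.sum_congr rfl fun i _ => by rw [hβsymm i j]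
  have hmpmp : (pinvSqrt S * P * pinvSqrt S * P).trace
      = ((∑ i, ∑ j, dv i * dv j * β i j : ℝ) : ℂ) := by
    have h1 : pinvSqrt S * P * pinvSqrt S * P = u * (D' * B * (D' * B)) * star u := by
      rw [hM]
      conv_lhs => rw [hPB]
      rw [collapse D' B, collapse (D' * B) D', collapse (D' * B * D') B]
      rw [Matrix.mul_assoc (D' * B) D' B]
    rw [h1, trace_conj, ← Matrix.mul_assoc, trace_mul_eq_sum, Complex.ofReal_sum]
    refine Finset.sum_congr rfl fun i _ => ?_
    rw [Complex.ofReal_sum]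
    refine Finset.sum_congr rfl fun j _ => ?_
    rw [hD'def, Matrix.mul_diagonal, Matrix.diagonal_mul, hBconj i j]
    simp only [hdvdef, hβdef]
    push_cast
    rw [← Complex.mul_conj (B i j)]
    ring
  -- rewrite the goal
  have hgoal_eq : (((1 : Matrix n n ℂ) - pinvSqrt S * P * pinvSqrt S) * P).trace.re
      = d - ∑ i, ∑ j, dv i * dv j * β i j := by
    rw [Matrix.sub_mul, Matrix.one_mul, Matrix.trace_sub, Complex.sub_re, htrP, hmpmp]
    simp
  rw [hgoal_eq]
  have hT0 : 0 ≤ ∑ i, ∑ j, dv i * dv j * β i j :=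
    Finset.sum_nonneg fun i _ => Finset.sum_nonneg fun j _ =>
      mul_nonneg (mul_nonneg (hdvnn i) (hdvnn j)) (hβnn i j)
  -- Cauchy-Schwarz
  have hCS : (∑ i, ∑ j, Real.sqrt (dv i * dv j) * β i j) ^ 2
      ≤ (∑ i, ∑ j, dv i * dv j * β i j) * d := by
    have h1 := Finset.sum_mul_sq_le_sq_mul_sq Finset.univ
      (fun q : n × n => Real.sqrt (dv q.1 * dv q.2) * Real.sqrt (β q.1 q.2))
      (fun q : n × n => Real.sqrt (β q.1 q.2))
    have e1 : ∀ q : n × n, (Real.sqrt (dv q.1 * dv q.2) * Real.sqrt (β q.1 q.2))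
        * Real.sqrt (β q.1 q.2) = Real.sqrt (dv q.1 * dv q.2) * β q.1 q.2 := by
      intro q; rw [mul_assoc, Real.mul_self_sqrt (hβnn _ _)]
    have e2 : ∀ q : n × n, (Real.sqrt (dv q.1 * dv q.2) * Real.sqrt (β q.1 q.2)) ^ 2
        = dv q.1 * dv q.2 * β q.1 q.2 := by
      intro q
      rw [mul_pow, Real.sq_sqrt (mul_nonneg (hdvnn _) (hdvnn _)), Real.sq_sqrt (hβnn _ _)]
    have e3 : ∀ q : n × n, (Real.sqrt (β q.1 q.2)) ^ 2 = β q.1 q.2 := fun q =>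
      Real.sq_sqrt (hβnn _ _)
    simp only [e1, e2, e3, Fintype.sum_prod_type] at h1
    rw [hd_eq] at h1
    exact h1
  -- pointwise lower bound
  have hpt : ∀ i j, ((6 - lam i - lam j) / 4) * β i j
      ≤ Real.sqrt (dv i * dv j) * β i j := by
    intro i j
    rcases eq_or_lt_of_le (hβnn i j) with h0 | hpos
    · rw [← h0, mul_zero, mul_zero]
    · have hBij : B i j ≠ 0 := by
        intro hB0
        have hz : β i j = 0 := by simp only [hβdef, hB0, map_zero]
        rw [hz] at hpos
        exact lt_irrefl 0 hpos
      have hli : 0 < lam i := lt_of_le_of_ne (hlamnn i) (fun h => hBij (hzero i h.symm j))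
      have hlj : 0 < lam j := by
        refine lt_of_le_of_ne (hlamnn j) (fun h => hBij ?_)
        have hz := hzero j h.symm i
        rw [hBconj j i, hz, map_zero]
      exact mul_le_mul_of_nonneg_right
        (by simpa [hdvdef] using scalar_ineq hli hlj) (hβnn i j)
  have hlow : d - t / 2 ≤ ∑ i, ∑ j, Real.sqrt (dv i * dv j) * β i j := by
    have h6 : ∑ i, ∑ j, ((6 - lam i - lam j) / 4) * β i j
        = (6 * d - (d + t) - (d + t)) / 4 := by
      have e : ∑ i, ∑ j, ((6 - lam i - lam j) / 4) * β i j
          = (6 * (∑ i, ∑ j, β i j) - (∑ i, ∑ j, lam i * β i j)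
            - (∑ i, ∑ j, lam j * β i j)) / 4 := by
        rw [Finset.mul_sum, ← Finset.sum_sub_distrib, ← Finset.sum_sub_distrib, Finset.sum_div]
        refine Finset.sum_congr rfl fun i _ => ?_
        rw [Finset.mul_sum, ← Finset.sum_sub_distrib, ← Finset.sum_sub_distrib, Finset.sum_div]
        exact Finset.sum_congr rfl fun j _ => by ring
      rw [e, hd_eq, hst, hst']
    have h7 : ∑ i, ∑ j, ((6 - lam i - lam j) / 4) * β i j
        ≤ ∑ i, ∑ j, Real.sqrt (dv i * dv j) * β i j :=
      Finset.sum_le_sum fun i _ => Finset.sum_le_sum fun j _ => hpt i j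
    calc d - t / 2 = (6 * d - (d + t) - (d + t)) / 4 := by ring
    _ = ∑ i, ∑ j, ((6 - lam i - lam j) / 4) * β i j := h6.symm
    _ ≤ _ := h7
  by_cases hcase : d - t / 2 ≤ 0
  · linarith
  · push_neg at hcase
    have h1 : (d - t / 2) ^ 2 ≤ (∑ i, ∑ j, Real.sqrt (dv i * dv j) * β i j) ^ 2 :=
      pow_le_pow_left₀ hcase.le hlow 2
    have h2 : (d - t / 2) ^ 2 ≤ (∑ i, ∑ j, dv i * dv j * β i j) * d := h1.trans hCS
    nlinarith [h2, hd, ht, sq_nonneg t]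

end MatrixHelpers

section GroupHelpers

variable {G : Type*} [Group G] [Fintype G] [DecidableEq G]

def sigma' (H : Subgroup G) : Matrix G G ℂ :=
  ((Fintype.card G : ℂ) / (Nat.card ↥H : ℂ)) • cosetState H

open Classical in
lemma smul_eq_sigma' (H : Subgroup G) :
    ((Fintype.card G : ℂ) / (Nat.card ↥H : ℂ)) • cosetState H = sigma' H := rfl

open Classical in
lemma sigma'_apply (H : Subgroup G) (x y : G) :
    sigma' H x y = if x⁻¹ * y ∈ H then ((Nat.card ↥H : ℂ))⁻¹ else 0 := by
  have hG : (Fintype.card G : ℂ) ≠ 0 := by simp [Fintype.card_ne_zero]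
  simp only [sigma', cosetState, Matrix.smul_apply, smul_eq_mul]
  split_ifs
  · field_simp
  · ring

lemma sigma'_isHermitian (H : Subgroup G) : (sigma' H).IsHermitian := by
  funext x y
  simp only [Matrix.conjTranspose_apply, sigma'_apply]
  have : y⁻¹ * x ∈ H ↔ x⁻¹ * y ∈ H := by
    constructor
    · intro h; simpa using H.inv_mem h
    · intro h; simpa using H.inv_mem h
  split_ifs with h1 h2 h2 <;> simp_all

lemma sigma'_idem (H : Subgroup G) : sigma' H * sigma' H = sigma' H := by
  classical
  funext x y
  simp only [Matrix.mul_apply, sigma'_apply]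
  rw [← Fintype.sum_bijective (fun z => x * z) (Group.mulLeft_bijective x) _ _ (fun z => rfl)]
  simp only [_root_.mul_inv_rev, inv_mul_cancel_left, mul_assoc]
  by_cases hxy : x⁻¹ * y ∈ H
  · rw [if_pos hxy]
    have key : ∀ z : G, (if z ∈ H then ((Nat.card ↥H : ℂ))⁻¹ else 0) *
        (if z⁻¹ * (x⁻¹ * y) ∈ H then ((Nat.card ↥H : ℂ))⁻¹ else 0)
        = if z ∈ H then ((Nat.card ↥H : ℂ))⁻¹ * (Nat.card ↥H : ℂ)⁻¹ else 0 := by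
      intro z
      have : z⁻¹ * (x⁻¹ * y) ∈ H ↔ z ∈ H := by
        constructor
        · intro h
          simpa [mul_assoc] using H.mul_mem hxy (H.inv_mem h)
        · intro h; exact H.mul_mem (H.inv_mem h) hxy
      split_ifs <;> simp_all
    rw [Finset.sum_congr rfl fun z _ => key z]
    rw [← Finset.sum_filter, Finset.sum_const, nsmul_eq_mul]
    have hcard : (Finset.univ.filter (fun z : G => z ∈ H)).card = Nat.card ↥H := by
      rw [Nat.card_eq_fintype_card, Fintype.card_subtype]
    have hH : (Nat.card ↥H : ℂ) ≠ 0 := by simp [Nat.card_pos.ne']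
    rw [hcard]
    field_simp
  · rw [if_neg hxy]
    apply Finset.sum_eq_zero
    intro z _
    by_cases h1 : z ∈ H
    · have h2 : z⁻¹ * (x⁻¹ * y) ∉ H := by
        intro h2
        exact hxy (by simpa [mul_assoc] using H.mul_mem h1 h2)
      rw [if_neg h2, mul_zero]
    · rw [if_neg h1, zero_mul]

lemma sigma'_trace (H : Subgroup G) :
    (sigma' H).trace = (Fintype.card G : ℂ) / (Nat.card ↥H : ℂ) := by
  simp only [Matrix.trace, Matrix.diag, sigma'_apply, inv_mul_cancel, one_mem,
    if_true, Finset.sum_const, Finset.card_univ, nsmul_eq_mul]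
  rw [div_eq_mul_inv]

lemma subgroup_eq_of_le_of_card_le {A B : Subgroup G} (h : A ≤ B)
    (hc : Nat.card ↥B ≤ Nat.card ↥A) : A = B := by
  have e1 : (A : Set G).ncard = Nat.card ↥A := by
    rw [← Nat.card_coe_set_eq, SetLike.coe_sort_coe]
  have e2 : (B : Set G).ncard = Nat.card ↥B := by
    rw [← Nat.card_coe_set_eq, SetLike.coe_sort_coe]
  exact SetLike.coe_injective <| Set.eq_of_subset_of_ncard_le h
    (by rw [e1, e2]; exact hc) (B : Set G).toFinite

lemma mem_eq_one_of_ne {p : ℕ} (hp : p.Prime) {H K : Subgroup G}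
    (hH : Nat.card ↥H = p) (hK : Nat.card ↥K = p) (hne : H ≠ K) {z : G}
    (h1 : z ∈ H) (h2 : z ∈ K) : z = 1 := by
  by_contra hz
  have hdvd : orderOf z ∣ p := hH ▸ Subgroup.orderOf_dvd_natCard H h1
  have ho : orderOf z = p := by
    rcases (Nat.Prime.eq_one_or_self_of_dvd hp _ hdvd) with h | h
    · exact absurd (orderOf_eq_one_iff.mp h) hz
    · exact h
  have hcz : Nat.card ↥(Subgroup.zpowers z) = p := by rw [Nat.card_zpowers, ho]
  have e1 : Subgroup.zpowers z = H :=
    subgroup_eq_of_le_of_card_le (Subgroup.zpowers_le.mpr h1) (by rw [hcz, hH])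
  have e2 : Subgroup.zpowers z = K :=
    subgroup_eq_of_le_of_card_le (Subgroup.zpowers_le.mpr h2) (by rw [hcz, hK])
  exact hne (e1 ▸ e2)

lemma sigma'_mul_trace {p : ℕ} (hp : p.Prime) {H K : Subgroup G}
    (hH : Nat.card ↥H = p) (hK : Nat.card ↥K = p) (hne : H ≠ K) :
    (sigma' H * sigma' K).trace = (Fintype.card G : ℂ) / (p : ℂ) ^ 2 := by
  classical
  rw [trace_mul_eq_sum]
  have key : ∀ x : G, (∑ j, sigma' H x j * sigma' K j x)
      = ((p : ℂ) ^ 2)⁻¹ := by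
    intro x
    rw [← Fintype.sum_bijective (fun z => x * z) (Group.mulLeft_bijective x) _ _ (fun z => rfl)]
    rw [Finset.sum_eq_single 1]
    · have e1 : x⁻¹ * (x * 1) = 1 := by group
      have e2 : (x * 1)⁻¹ * x = 1 := by group
      rw [sigma'_apply, sigma'_apply, e1, e2, if_pos H.one_mem, if_pos K.one_mem, hH, hK, sq,
        mul_inv]
    · intro w _ hw
      simp only [sigma'_apply, inv_mul_cancel_left, _root_.mul_inv_rev, mul_assoc,
        inv_mul_cancel, mul_one]
      by_cases h1 : w ∈ H
      · have h2 : w⁻¹ ∉ K := by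
          intro h2
          exact hw (mem_eq_one_of_ne hp hH hK hne h1 (by simpa using K.inv_mem h2))
        rw [if_neg h2, mul_zero]
      · rw [if_neg h1, zero_mul]
    · simp
  rw [Finset.sum_congr rfl fun x _ => key x, Finset.sum_const, Finset.card_univ, nsmul_eq_mul]
  rw [div_eq_mul_inv]

end GroupHelpers

end PGMAux

open PGMAux in
/-- Tight sample complexity for candidate subgroups of common prime order p:
any POVM succeeding with probability ≥ 2/3 needs k ≥ log|𝓗|/log p − log(3/2)/log p copies,
and the pretty good measurement on k copies errs with probability at most 4|𝓗|/p^k. -/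
theorem prime_order_sample_complexity {G : Type*} [Group G] [Fintype G] [DecidableEq G]
    (𝓗 : Finset (Subgroup G)) (p : ℕ) (hp : p.Prime)
    (horder : ∀ H ∈ 𝓗, Nat.card ↥H = p) (hcard : 2 ≤ 𝓗.card) :
    (∀ k : ℕ, ∀ M : Subgroup G → Matrix (Fin k → G) (Fin k → G) ℂ,
        (∀ H ∈ 𝓗, (M H).PosSemidef) → (∑ H ∈ 𝓗, M H = 1) →
        (2/3 : ℝ) ≤
          (1 / (𝓗.card : ℝ)) * ∑ H ∈ 𝓗, ((M H * tensorPow (cosetState H) k).trace).re →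
        Real.log (𝓗.card : ℝ) / Real.log (p : ℝ) - Real.log (3/2) / Real.log (p : ℝ) ≤ (k : ℝ)) ∧
    (∀ k : ℕ, ∀ H ∈ 𝓗,
        ((((1 : Matrix (Fin k → G) (Fin k → G) ℂ) -
            pinvSqrt (∑ K ∈ 𝓗,
                tensorPow (((Fintype.card G : ℂ) / (Nat.card ↥K : ℂ)) • cosetState K) k) *
              tensorPow (((Fintype.card G : ℂ) / (Nat.card ↥H : ℂ)) • cosetState H) k *
              pinvSqrt (∑ K ∈ 𝓗,
                tensorPow (((Fintype.card G : ℂ) / (Nat.card ↥K : ℂ)) • cosetState K) k)) *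
          tensorPow (cosetState H) k).trace).re ≤ 4 * (𝓗.card : ℝ) / (p : ℝ) ^ k) := by
  classical
  have hG0 : (0:ℝ) < (Fintype.card G : ℝ) := by exact_mod_cast Fintype.card_pos
  have hp0 : (0:ℝ) < (p : ℝ) := by exact_mod_cast hp.pos
  have hcard2 : (2:ℝ) ≤ (𝓗.card : ℝ) := by exact_mod_cast hcard
  -- coset state decomposition
  have hcs : ∀ (k : ℕ), ∀ H ∈ 𝓗, tensorPow (cosetState H) k
      = (Complex.ofReal ((p:ℝ) / (Fintype.card G : ℝ))) ^ k • tensorPow (sigma' H) k := by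
    intro k H hH
    have h1 : cosetState H = (Complex.ofReal ((p:ℝ) / (Fintype.card G : ℝ))) • sigma' H := by
      rw [sigma', smul_smul]
      have he : (Complex.ofReal ((p:ℝ) / (Fintype.card G : ℝ)))
          * ((Fintype.card G : ℂ) / (Nat.card ↥H : ℂ)) = 1 := by
        rw [horder H hH]
        have h2 : ((p : ℕ) : ℂ) ≠ 0 := Nat.cast_ne_zero.mpr hp.pos.ne'
        have h3 : ((Fintype.card G : ℕ) : ℂ) ≠ 0 := Nat.cast_ne_zero.mpr Fintype.card_pos.ne'
        push_cast
        field_simp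
      rw [he, one_smul]
    rw [h1, tensorPow_smul]
  constructor
  · -- lower bound
    intro k M hMpsd hMsum havg
    set c : ℝ := ((p:ℝ) / (Fintype.card G : ℝ)) with hcdef
    have hc0 : 0 ≤ c := by positivity
    have key : ∀ H ∈ 𝓗, ((M H * tensorPow (cosetState H) k).trace).re
        ≤ c ^ k * ((M H).trace).re := by
      intro H hH
      set P := tensorPow (sigma' H) k with hPdef
      have hPh : P.IsHermitian := tensorPow_isHermitian (sigma'_isHermitian H) k
      have hPidem : P * P = P := by rw [hPdef, tensorPow_mul, sigma'_idem]
      rw [hcs k H hH, Matrix.mul_smul, Matrix.trace_smul, smul_eq_mul, ← Complex.ofReal_pow,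
        Complex.re_ofReal_mul, ← hPdef]
      apply mul_le_mul_of_nonneg_left _ (pow_nonneg hc0 k)
      have hQ : ((1 : Matrix (Fin k → G) (Fin k → G) ℂ) - P).PosSemidef := by
        apply psd_of_idem
        · unfold Matrix.IsHermitian
          rw [Matrix.conjTranspose_sub, Matrix.conjTranspose_one, hPh.eq]
        · have hexp : ((1 : Matrix (Fin k → G) (Fin k → G) ℂ) - P) * (1 - P)
              = 1 - P - P + P * P := by noncomm_ring
          rw [hexp, hPidem]
          abel
      have h2 : 0 ≤ ((M H * (1 - P)).trace).re :=
        trace_mul_psd_re_nonneg (hMpsd H hH) hQ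
      have h3 : (M H * (1 - P)).trace = (M H).trace - (M H * P).trace := by
        rw [Matrix.mul_sub, Matrix.mul_one, Matrix.trace_sub]
      rw [h3, Complex.sub_re] at h2
      linarith
    have hsum1 : ∑ H ∈ 𝓗, ((M H).trace).re = ((Fintype.card G : ℝ)) ^ k := by
      have h1 : ∑ H ∈ 𝓗, ((M H).trace) = ((Fintype.card G ^ k : ℕ) : ℂ) := by
        rw [← Matrix.trace_sum, hMsum, Matrix.trace_one]
        norm_cast
        simp [Fintype.card_fun]
      rw [← Complex.re_sum, h1, Complex.natCast_re]
      push_cast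
      ring
    have hchain : (2/3 : ℝ) * (𝓗.card : ℝ) ≤ (p:ℝ)^k := by
      have hcard0 : (0:ℝ) < (𝓗.card : ℝ) := by linarith
      have h5 := havg
      rw [one_div, inv_mul_eq_div, le_div_iff₀ hcard0] at h5
      have h6 : ∑ H ∈ 𝓗, ((M H * tensorPow (cosetState H) k).trace).re
          ≤ ∑ H ∈ 𝓗, c ^ k * ((M H).trace).re := Finset.sum_le_sum key
      rw [← Finset.mul_sum, hsum1] at h6
      have h7 : c ^ k * (Fintype.card G : ℝ)^k = (p:ℝ)^k := by
        rw [hcdef, ← mul_pow, div_mul_cancel₀]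
        exact ne_of_gt hG0
      calc (2/3 : ℝ) * (𝓗.card : ℝ) ≤ _ := h5
      _ ≤ c ^ k * (Fintype.card G : ℝ)^k := h6
      _ = (p:ℝ)^k := h7
    have hp1 : (1:ℝ) < p := by exact_mod_cast hp.one_lt
    have hlogp : 0 < Real.log p := Real.log_pos hp1
    rw [div_sub_div_same, div_le_iff₀ hlogp]
    have h8 : Real.log ((2/3 : ℝ) * (𝓗.card : ℝ)) ≤ Real.log ((p:ℝ)^k) :=
      Real.log_le_log (by positivity) hchain
    rw [Real.log_pow] at h8
    have h9 : Real.log ((2/3 : ℝ) * (𝓗.card : ℝ))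
        = Real.log (𝓗.card : ℝ) - Real.log (3/2) := by
      rw [Real.log_mul (by norm_num) (by positivity),
        show (2/3:ℝ) = (3/2)⁻¹ by norm_num, Real.log_inv]
      ring
    rw [h9] at h8
    exact h8.trans (le_of_eq (by push_cast; ring))
  · -- PGM upper bound
    intro k H hH
    simp only [smul_eq_sigma']
    set P := tensorPow (sigma' H) k with hPdef
    set S := ∑ K ∈ 𝓗, tensorPow (sigma' K) k with hSdef
    set d : ℝ := ((Fintype.card G : ℝ) / (p:ℝ)) ^ k with hddef
    set t : ℝ := ((𝓗.card : ℝ) - 1) * ((Fintype.card G : ℝ) / (p:ℝ)^2) ^ k with htdef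
    have hPh : P.IsHermitian := tensorPow_isHermitian (sigma'_isHermitian H) k
    have hPidem : P * P = P := by rw [hPdef, tensorPow_mul, sigma'_idem]
    have hS : S.PosSemidef := by
      rw [hSdef]
      exact psd_sum _ _ fun K _ => psd_of_idem (tensorPow_isHermitian (sigma'_isHermitian K) k)
        (by rw [tensorPow_mul, sigma'_idem])
    have hle : (S - P).PosSemidef := by
      have he : S - P = ∑ K ∈ 𝓗.erase H, tensorPow (sigma' K) k := by
        rw [hSdef, ← Finset.sum_erase_add 𝓗 _ hH, hPdef, add_sub_cancel_right]
      rw [he]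
      exact psd_sum _ _ fun K _ => psd_of_idem (tensorPow_isHermitian (sigma'_isHermitian K) k)
        (by rw [tensorPow_mul, sigma'_idem])
    have hd0 : 0 < d := by rw [hddef]; positivity
    have ht0 : 0 ≤ t := by
      rw [htdef]
      apply mul_nonneg (by linarith) (by positivity)
    have htrP : P.trace = ((d : ℝ) : ℂ) := by
      rw [hPdef, tensorPow_trace, sigma'_trace, horder H hH, hddef]
      push_cast
      ring
    have htrSP : (S * P).trace = ((d + t : ℝ) : ℂ) := by
      rw [hSdef, Finset.sum_mul, Matrix.trace_sum, ← Finset.sum_erase_add 𝓗 _ hH]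
      have hPP : (tensorPow (sigma' H) k * P).trace = ((d : ℝ) : ℂ) := by
        rw [← hPdef, hPidem, htrP]
      have hterm : ∀ K ∈ 𝓗.erase H, (tensorPow (sigma' K) k * P).trace
          = ((((Fintype.card G : ℝ) / (p:ℝ)^2) ^ k : ℝ) : ℂ) := by
        intro K hK
        obtain ⟨hKne, hKmem⟩ := Finset.mem_erase.mp hK
        rw [hPdef, tensorPow_mul, tensorPow_trace,
          sigma'_mul_trace hp (horder K hKmem) (horder H hH) hKne]
        push_cast
        ring
      rw [Finset.sum_congr rfl hterm, Finset.sum_const, Finset.card_erase_of_mem hH,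
        nsmul_eq_mul, hPP, htdef]
      have h1 : ((𝓗.card - 1 : ℕ) : ℂ) = ((𝓗.card : ℝ) : ℂ) - 1 := by
        have : (1:ℕ) ≤ 𝓗.card := le_trans one_le_two hcard
        push_cast [this]
        ring
      rw [h1]
      push_cast
      ring
    have hkey := pgm_key hPh hPidem hS hle hd0 ht0 htrP htrSP
    rw [hcs k H hH, Matrix.mul_smul, Matrix.trace_smul, smul_eq_mul, ← Complex.ofReal_pow,
      Complex.re_ofReal_mul]
    rw [← hPdef]
    have h1 : ((p:ℝ)/(Fintype.card G : ℝ))^k *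
        ((((1 : Matrix (Fin k → G) (Fin k → G) ℂ) - pinvSqrt S * P * pinvSqrt S) * P).trace).re
        ≤ ((p:ℝ)/(Fintype.card G : ℝ))^k * t :=
      mul_le_mul_of_nonneg_left hkey (by positivity)
    have harith : ((p:ℝ)/(Fintype.card G : ℝ))^k * t = ((𝓗.card : ℝ) - 1)/(p:ℝ)^k := by
      have e : ((p:ℝ)/(Fintype.card G : ℝ)) * ((Fintype.card G : ℝ)/(p:ℝ)^2) = 1/(p:ℝ) := by
        field_simp
      calc ((p:ℝ)/(Fintype.card G : ℝ))^k * t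
          = ((𝓗.card : ℝ) - 1) * (((p:ℝ)/(Fintype.card G : ℝ))
            * ((Fintype.card G : ℝ)/(p:ℝ)^2))^k := by rw [htdef, mul_pow]; ring
      _ = ((𝓗.card : ℝ) - 1) * (1/(p:ℝ))^k := by rw [e]
      _ = ((𝓗.card : ℝ) - 1)/(p:ℝ)^k := by rw [div_pow, one_pow, mul_one_div]
    have hfinal : ((𝓗.card : ℝ) - 1)/(p:ℝ)^k ≤ 4 * (𝓗.card : ℝ) / (p:ℝ)^k := by
      have hps : (0:ℝ) < (p:ℝ)^k := by positivity
      rw [div_le_div_iff₀ hps hps]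
      have h9 : (0:ℝ) ≤ (3*(𝓗.card:ℝ)+1) * (p:ℝ)^k := by positivity
      nlinarith [h9]
    calc _ ≤ ((p:ℝ)/(Fintype.card G : ℝ))^k * t := h1
    _ = ((𝓗.card : ℝ) - 1)/(p:ℝ)^k := harith
    _ ≤ _ := hfinal
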